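/- Fix 1 ≤ l ≤ L-1 and α ∈ ℝ. For any data S, loss ℓ, and activation σ (each differentiable), if θ is a critical point of the empirical risk of NN({m_l}_{l=0}^L), i.e., ∇_θ R_S(θ) = 0, then T^α_{l,0}(θ) is a critical point of the empirical risk of the one-neuron-wider network, i.e., ∇_θ R_S(T^α_{l,0}(θ)) = 0. -/
import Mathlib


namespace EmbeddingPrinciple

/-- Parameters of a fully-connected NN: `(θ l).1 i j` is the weight `W^{[l+1]}_{ij}`
and `(θ l).2 i` is the bias `b^{[l+1]}_i` (the paper's layer `l` corresponds to index `l-1`).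
Only the coordinates below the widths are meaningful for a concrete architecture. -/
abbrev NNParams : Type := ℕ → (ℕ → ℕ → ℝ) × (ℕ → ℝ)

/-- Feature vectors `f^{[l]}` (entrywise activation `σ`); `m` is the width function. -/
noncomputable def feat (σ : ℝ → ℝ) (m : ℕ → ℕ) (θ : NNParams) (x : ℕ → ℝ) : ℕ → ℕ → ℝ
  | 0 => x
  | l + 1 => fun i =>
      σ ((∑ j ∈ Finset.range (m l), (θ l).1 i j * feat σ m θ x l j) + (θ l).2 i)

/-- Pre-activation of layer `l+1`: `W^{[l+1]} f^{[l]} + b^{[l+1]}`. -/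
noncomputable def preact (σ : ℝ → ℝ) (m : ℕ → ℕ) (θ : NNParams) (x : ℕ → ℝ) (l i : ℕ) : ℝ :=
  (∑ j ∈ Finset.range (m l), (θ l).1 i j * feat σ m θ x l j) + (θ l).2 i

/-- Output `f_θ` of the `(K+1)`-layer network (the paper's `L` is `K+1`). -/
noncomputable def nnOut (σ : ℝ → ℝ) (m : ℕ → ℕ) (K : ℕ) (θ : NNParams) (x : ℕ → ℝ) :
    ℕ → ℝ := fun i => preact σ m θ x K i

/-- Feature gradient `g^{[l+1]} = σ'(W^{[l+1]} f^{[l]} + b^{[l+1]})`. -/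
noncomputable def gFeat (σ : ℝ → ℝ) (m : ℕ → ℕ) (θ : NNParams) (x : ℕ → ℝ) (l i : ℕ) : ℝ :=
  deriv σ (preact σ m θ x l i)

/-- Output truncated to the valid output coordinates. -/
noncomputable def truncOut (σ : ℝ → ℝ) (m : ℕ → ℕ) (K : ℕ) (θ : NNParams) (x : ℕ → ℝ) :
    ℕ → ℝ := fun i => if i < m (K + 1) then nnOut σ m K θ x i else 0

/-- Empirical risk `R_S(θ) = (1/n) ∑ᵢ ℓ(f_θ(xᵢ), yᵢ)`. -/
noncomputable def risk (σ : ℝ → ℝ) (m : ℕ → ℕ) (K : ℕ)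
    (loss : (ℕ → ℝ) → (ℕ → ℝ) → ℝ) {n : ℕ} (X Y : Fin n → ℕ → ℝ) (θ : NNParams) : ℝ :=
  (n : ℝ)⁻¹ * ∑ a : Fin n, loss (truncOut σ m K θ (X a)) (Y a)

/-- Update a single weight coordinate. -/
def updW (θ : NNParams) (l i j : ℕ) (t : ℝ) : NNParams := fun l' =>
  if l' = l then ((fun i' j' => if i' = i ∧ j' = j then t else (θ l).1 i' j'), (θ l).2)
  else θ l'

/-- Update a single bias coordinate. -/
def updB (θ : NNParams) (l i : ℕ) (t : ℝ) : NNParams := fun l' =>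
  if l' = l then ((θ l).1, fun i' => if i' = i then t else (θ l).2 i') else θ l'

/-- `θ` is a critical point of `R` : all partial derivatives with respect to the valid
coordinates of the `(K+1)`-layer architecture with width function `m` vanish. -/
def IsCritical (R : NNParams → ℝ) (m : ℕ → ℕ) (K : ℕ) (θ : NNParams) : Prop :=
  (∀ l, l ≤ K → ∀ i, i < m (l + 1) → ∀ j, j < m l →
      deriv (fun t => R (updW θ l i j t)) ((θ l).1 i j) = 0) ∧
  (∀ l, l ≤ K → ∀ i, i < m (l + 1) →
      deriv (fun t => R (updB θ l i t)) ((θ l).2 i) = 0)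

/-- Equality of two parameter tuples on all valid coordinates of the architecture. -/
def ParamEqOn (m : ℕ → ℕ) (K : ℕ) (θ₁ θ₂ : NNParams) : Prop :=
  ∀ l, l ≤ K → ∀ i, i < m (l + 1) →
    (∀ j, j < m l → (θ₁ l).1 i j = (θ₂ l).1 i j) ∧ (θ₁ l).2 i = (θ₂ l).2 i

/-- Error vectors by reversed index: `errRev … t = z^{[K+1-t]}`, where `z^{[K+1]} = ∇ℓ`
(represented by the function `dloss`) and `z^{[l]} = (W^{[l+1]})ᵀ (z^{[l+1]} ∘ g^{[l+1]})`. -/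
noncomputable def errRev (σ : ℝ → ℝ) (m : ℕ → ℕ) (K : ℕ) (θ : NNParams)
    (dloss : (ℕ → ℝ) → (ℕ → ℝ) → ℕ → ℝ) (x y : ℕ → ℝ) : ℕ → ℕ → ℝ
  | 0 => dloss (truncOut σ m K θ x) y
  | t + 1 => fun j =>
      ∑ i ∈ Finset.range (m (K + 1 - t)),
        (θ (K - t)).1 i j *
          (errRev σ m K θ dloss x y t i * (if t = 0 then 1 else gFeat σ m θ x (K - t) i))

/-- `e^{[l]} = z^{[l]} ∘ g^{[l]}` (with `g^{[K+1]} = 1`). -/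
noncomputable def errE (σ : ℝ → ℝ) (m : ℕ → ℕ) (K : ℕ) (θ : NNParams)
    (dloss : (ℕ → ℝ) → (ℕ → ℝ) → ℕ → ℝ) (x y : ℕ → ℝ) (l i : ℕ) : ℝ :=
  errRev σ m K θ dloss x y (K + 1 - l) i *
    (if l = K + 1 then 1 else gFeat σ m θ x (l - 1) i)

/-- Differentiability of the loss in its first argument (on each finite-dimensional
coordinate block). -/
def LossDiff (loss : (ℕ → ℝ) → (ℕ → ℝ) → ℝ) : Prop :=
  ∀ (y : ℕ → ℝ) (d : ℕ),
    Differentiable ℝ (fun u : Fin d → ℝ => loss (fun i => if h : i < d then u ⟨i, h⟩ else 0) y)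

/-- Widths after adding one neuron in the paper's layer `p+1`. -/
def widen (m : ℕ → ℕ) (p : ℕ) : ℕ → ℕ := fun l => if l = p + 1 then m (p + 1) + 1 else m l

/-- One-step null embedding `T^α_{l,0}` at the paper's layer `l = p+1`. -/
def nullEmb (m : ℕ → ℕ) (p : ℕ) (α : ℝ) (θ : NNParams) : NNParams := fun l =>
  if l = p then
    ((fun i j => if i = m (p + 1) then 0 else (θ p).1 i j),
     (fun i => if i = m (p + 1) then α else (θ p).2 i))
  else if l = p + 1 then
    ((fun i j => if j = m (p + 1) then 0 else (θ (p + 1)).1 i j), (θ (p + 1)).2)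
  else θ l

/-- One-step splitting embedding `T^α_{l,s}` at the paper's layer `l = p+1`,
splitting neuron `s`. -/
def splitEmb (m : ℕ → ℕ) (p s : ℕ) (α : ℝ) (θ : NNParams) : NNParams := fun l =>
  if l = p then
    ((fun i j => if i = m (p + 1) then (θ p).1 s j else (θ p).1 i j),
     (fun i => if i = m (p + 1) then (θ p).2 s else (θ p).2 i))
  else if l = p + 1 then
    ((fun i j =>
        if j = s then (1 - α) * (θ (p + 1)).1 i s
        else if j = m (p + 1) then α * (θ (p + 1)).1 i s
        else (θ (p + 1)).1 i j),
     (θ (p + 1)).2)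
  else θ l

/- ====== auxiliary lemmas ====== -/


lemma deriv_comp_mul (f : ℝ → ℝ) (c x : ℝ) :
    deriv (fun t => f (c * t)) x = c * deriv f (c * x) := by
  rcases eq_or_ne c 0 with rfl | hc
  · simp
  by_cases hf : DifferentiableAt ℝ f (c * x)
  · have h2 : DifferentiableAt ℝ (fun t : ℝ => c * t) x := by fun_prop
    have h3 := deriv_comp x hf h2
    have h4 : deriv (fun t : ℝ => c * t) x = c := by
      rw [deriv_const_mul_field c, deriv_id'', mul_one]
    rw [show (fun t => f (c * t)) = (f ∘ fun t : ℝ => c * t) from rfl, h3, h4, mul_comm]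
  · have hf' : ¬ DifferentiableAt ℝ (fun t => f (c * t)) x := by
      intro hdiff
      apply hf
      have h2 : DifferentiableAt ℝ (fun s : ℝ => c⁻¹ * s) (c * x) := by fun_prop
      have h3 : DifferentiableAt ℝ (fun t => f (c * t)) (c⁻¹ * (c * x)) := by
        rwa [inv_mul_cancel_left₀ hc]
      have h4 := DifferentiableAt.comp (c * x) h3 h2
      have h5 : ((fun t => f (c * t)) ∘ fun s : ℝ => c⁻¹ * s) = f := by
        funext s; simp [Function.comp, mul_inv_cancel_left₀ hc]
      rwa [h5] at h4
    rw [deriv_zero_of_not_differentiableAt hf, deriv_zero_of_not_differentiableAt hf',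
      mul_zero]

lemma deriv_affine (g : ℝ → ℝ) (b c : ℝ) :
    deriv (fun t => g (b + c * t)) 0 = c * deriv g b := by
  have h := deriv_comp_mul (fun s => g (b + s)) c 0
  simp only [mul_zero] at h
  rw [show (fun t => g (b + c * t)) = (fun t => (fun s => g (b + s)) (c * t)) from rfl, h,
    deriv_comp_const_add]
  norm_num

/-- Simulation hypotheses relating widened parameters `θ'` to base parameters `θ`. -/
def SimH (σ : ℝ → ℝ) (m : ℕ → ℕ) (p : ℕ) (θ' θ : NNParams) : Prop :=
  (∀ l, l ≠ p → l ≠ p + 1 → θ' l = θ l) ∧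
  (∀ i, i < m (p + 1) → ∀ j, (θ' p).1 i j = (θ p).1 i j) ∧
  (∀ i, i < m (p + 1) → (θ' p).2 i = (θ p).2 i) ∧
  (∀ i j, j ≠ m (p + 1) → (θ' (p + 1)).1 i j = (θ (p + 1)).1 i j) ∧
  (∀ (x : ℕ → ℝ) i, (θ' (p + 1)).1 i (m (p + 1)) * feat σ (widen m p) θ' x (p + 1) (m (p + 1))
      + (θ' (p + 1)).2 i = (θ (p + 1)).2 i)

lemma simH_of (σ : ℝ → ℝ) (m : ℕ → ℕ) (p : ℕ) (θ' θ : NNParams)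
    (h1 : ∀ l, l ≠ p → l ≠ p + 1 → θ' l = θ l)
    (h2 : ∀ i, i < m (p + 1) → ∀ j, (θ' p).1 i j = (θ p).1 i j)
    (h3 : ∀ i, i < m (p + 1) → (θ' p).2 i = (θ p).2 i)
    (h4 : ∀ i j, j ≠ m (p + 1) → (θ' (p + 1)).1 i j = (θ (p + 1)).1 i j)
    (h5col : ∀ i, (θ' (p + 1)).1 i (m (p + 1)) = 0)
    (h5b : ∀ i, (θ' (p + 1)).2 i = (θ (p + 1)).2 i) :
    SimH σ m p θ' θ :=
  ⟨h1, h2, h3, h4, fun x i => by rw [h5col, zero_mul, zero_add, h5b]⟩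

lemma widen_ne (m : ℕ → ℕ) (p l : ℕ) (h : l ≠ p + 1) : widen m p l = m l := if_neg h

lemma widen_self (m : ℕ → ℕ) (p : ℕ) : widen m p (p + 1) = m (p + 1) + 1 := if_pos rfl

lemma preact_eq_of (σ : ℝ → ℝ) (m : ℕ → ℕ) (p : ℕ) (θ' θ : NNParams)
    (h : SimH σ m p θ' θ) (x : ℕ → ℝ) (l i : ℕ)
    (hfeat : ∀ j, j < m l → feat σ (widen m p) θ' x l j = feat σ m θ x l j)
    (hip : l = p → i < m (p + 1)) :
    preact σ (widen m p) θ' x l i = preact σ m θ x l i := by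
  obtain ⟨hA, hB, hB2, hC, hD⟩ := h
  by_cases hlp : l = p
  · subst hlp
    unfold preact
    rw [widen_ne m l l (by omega), hB2 i (hip rfl)]
    congr 1
    refine Finset.sum_congr rfl fun j hj => ?_
    rw [hB i (hip rfl) j, hfeat j (Finset.mem_range.mp hj)]
  · by_cases hl1 : l = p + 1
    · subst hl1
      unfold preact
      rw [widen_self, Finset.sum_range_succ, add_assoc, hD x i]
      congr 1
      refine Finset.sum_congr rfl fun j hj => ?_
      have hj' := Finset.mem_range.mp hj
      rw [hC i j (by omega), hfeat j hj']
    · unfold preact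
      rw [widen_ne m p l hl1, hA l hlp hl1]
      congr 1
      refine Finset.sum_congr rfl fun j hj => ?_
      rw [hfeat j (Finset.mem_range.mp hj)]

lemma feat_eq_of (σ : ℝ → ℝ) (m : ℕ → ℕ) (p : ℕ) (θ' θ : NNParams)
    (h : SimH σ m p θ' θ) (x : ℕ → ℝ) :
    ∀ l i, i < m l → feat σ (widen m p) θ' x l i = feat σ m θ x l i := by
  intro l
  induction l with
  | zero => intro i _; rfl
  | succ l ih =>
    intro i hi
    show σ (preact σ (widen m p) θ' x l i) = σ (preact σ m θ x l i)
    exact congrArg σ (preact_eq_of σ m p θ' θ h x l i ih (fun hl => by rw [hl] at hi; exact hi))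

lemma risk_eq_of (σ : ℝ → ℝ) (m : ℕ → ℕ) (p K : ℕ) (hpK : p < K) (θ' θ : NNParams)
    (h : SimH σ m p θ' θ) (loss : (ℕ → ℝ) → (ℕ → ℝ) → ℝ) {n : ℕ} (X Y : Fin n → ℕ → ℝ) :
    risk σ (widen m p) K loss X Y θ' = risk σ m K loss X Y θ := by
  unfold risk
  congr 1
  refine Finset.sum_congr rfl fun a _ => ?_
  congr 1
  funext i
  unfold truncOut nnOut
  rw [widen_ne m p (K + 1) (by omega)]
  by_cases hi : i < m (K + 1)
  · rw [if_pos hi, if_pos hi]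
    exact preact_eq_of σ m p θ' θ h _ K i (fun j hj => feat_eq_of σ m p θ' θ h _ K j hj)
      (fun hKp => absurd hKp (by omega))
  · rw [if_neg hi, if_neg hi]

lemma featNew_eq (σ : ℝ → ℝ) (m : ℕ → ℕ) (p : ℕ) (α : ℝ) (θ'' : NNParams) (x : ℕ → ℝ)
    (hrow : ∀ j, (θ'' p).1 (m (p + 1)) j = 0) (hb : (θ'' p).2 (m (p + 1)) = α) :
    feat σ (widen m p) θ'' x (p + 1) (m (p + 1)) = σ α := by
  show σ ((∑ j ∈ Finset.range (widen m p p), (θ'' p).1 (m (p + 1)) j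
      * feat σ (widen m p) θ'' x p j) + (θ'' p).2 (m (p + 1))) = σ α
  simp [hrow, hb]


/-- the one-step null embedding preserves criticality of the empirical risk. -/
theorem one_step_null_embedding_criticality
    (K : ℕ) (hK : 1 ≤ K) (m : ℕ → ℕ) (p : ℕ) (hp : p < K) (α : ℝ)
    (σ : ℝ → ℝ) (hσ : Differentiable ℝ σ)
    (loss : (ℕ → ℝ) → (ℕ → ℝ) → ℝ) (hloss : LossDiff loss)
    (n : ℕ) (X Y : Fin n → ℕ → ℝ) (θ : NNParams)
    (hcrit : IsCritical (risk σ m K loss X Y) m K θ) :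
    IsCritical (risk σ (widen m p) K loss X Y) (widen m p) K (nullEmb m p α θ) := by
  obtain ⟨hcW, hcB⟩ := hcrit
  have hpne : p ≠ p + 1 := by omega
  have hqne : p + 1 ≠ p := by omega
  constructor
  · -- weights
    intro l hl i hi j hj
    by_cases hlp : l = p
    · rw [hlp] at hi hj ⊢
      rw [widen_self] at hi
      rw [widen_ne m p p hpne] at hj
      rcases Nat.lt_succ_iff_lt_or_eq.mp hi with hi' | rfl
      · -- old row of layer p
        have hsim : ∀ t, SimH σ m p (updW (nullEmb m p α θ) p i j t) (updW θ p i j t) := by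
          intro t
          refine simH_of σ m p _ _ ?_ ?_ ?_ ?_ ?_ ?_
          · intro l' h1 h2; simp [updW, nullEmb, h1, h2]
          · intro i2 hi2 j2
            by_cases h : i2 = i ∧ j2 = j <;>
              simp [updW, nullEmb, h, Nat.ne_of_lt hi2]
          · intro i2 hi2; simp [updW, nullEmb, Nat.ne_of_lt hi2]
          · intro i2 j2 hj2; simp [updW, nullEmb, hpne, hqne, hj2]
          · intro i2; simp [updW, nullEmb, hpne, hqne]
          · intro i2; simp [updW, nullEmb, hpne, hqne]
        have heq : (fun t => risk σ (widen m p) K loss X Y (updW (nullEmb m p α θ) p i j t))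
            = fun t => risk σ m K loss X Y (updW θ p i j t) :=
          funext fun t => risk_eq_of σ m p K hp _ _ (hsim t) loss X Y
        rw [heq, show ((nullEmb m p α θ) p).1 i j = (θ p).1 i j by
          simp [nullEmb, Nat.ne_of_lt hi']]
        exact hcW p (le_of_lt hp) i hi' j hj
      · -- new row of layer p : risk is constant
        have hsim : ∀ t, SimH σ m p (updW (nullEmb m p α θ) p (m (p + 1)) j t) θ := by
          intro t
          refine simH_of σ m p _ _ ?_ ?_ ?_ ?_ ?_ ?_
          · intro l' h1 h2; simp [updW, nullEmb, h1, h2]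
          · intro i2 hi2 j2; simp [updW, nullEmb, Nat.ne_of_lt hi2]
          · intro i2 hi2; simp [updW, nullEmb, Nat.ne_of_lt hi2]
          · intro i2 j2 hj2; simp [updW, nullEmb, hpne, hqne, hj2]
          · intro i2; simp [updW, nullEmb, hpne, hqne]
          · intro i2; simp [updW, nullEmb, hpne, hqne]
        have heq : (fun t => risk σ (widen m p) K loss X Y
              (updW (nullEmb m p α θ) p (m (p + 1)) j t))
            = fun _ => risk σ m K loss X Y θ :=
          funext fun t => risk_eq_of σ m p K hp _ _ (hsim t) loss X Y
        rw [heq]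
        exact deriv_const _ _
    · by_cases hlq : l = p + 1
      · rw [hlq] at hi hj ⊢
        rw [widen_ne m p (p + 1 + 1) (by omega)] at hi
        rw [widen_self] at hj
        rcases Nat.lt_succ_iff_lt_or_eq.mp hj with hj' | rfl
        · -- old column of layer p+1
          have hsim : ∀ t, SimH σ m p (updW (nullEmb m p α θ) (p + 1) i j t)
              (updW θ (p + 1) i j t) := by
            intro t
            refine simH_of σ m p _ _ ?_ ?_ ?_ ?_ ?_ ?_
            · intro l' h1 h2; simp [updW, nullEmb, h1, h2]
            · intro i2 hi2 j2; simp [updW, nullEmb, hpne, Nat.ne_of_lt hi2]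
            · intro i2 hi2; simp [updW, nullEmb, hpne, Nat.ne_of_lt hi2]
            · intro i2 j2 hj2
              by_cases h : i2 = i ∧ j2 = j <;> simp [updW, nullEmb, hqne, h, hj2]
            · intro i2
              simp [updW, nullEmb, hqne, Nat.ne_of_gt hj']
            · intro i2; simp [updW, nullEmb, hqne]
          have heq : (fun t => risk σ (widen m p) K loss X Y
                (updW (nullEmb m p α θ) (p + 1) i j t))
              = fun t => risk σ m K loss X Y (updW θ (p + 1) i j t) :=
            funext fun t => risk_eq_of σ m p K hp _ _ (hsim t) loss X Y
          rw [heq, show ((nullEmb m p α θ) (p + 1)).1 i j = (θ (p + 1)).1 i j by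
            simp [nullEmb, hqne, Nat.ne_of_lt hj']]
          exact hcW (p + 1) hp i hi j hj'
        · -- new column of layer p+1 : reparametrized bias line
          have hsim : ∀ t, SimH σ m p (updW (nullEmb m p α θ) (p + 1) i (m (p + 1)) t)
              (updB θ (p + 1) i ((θ (p + 1)).2 i + σ α * t)) := by
            intro t
            refine ⟨?_, ?_, ?_, ?_, ?_⟩
            · intro l' h1 h2; simp [updW, updB, nullEmb, h1, h2]
            · intro i2 hi2 j2; simp [updW, updB, nullEmb, hpne, Nat.ne_of_lt hi2]
            · intro i2 hi2; simp [updW, updB, nullEmb, hpne, Nat.ne_of_lt hi2]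
            · intro i2 j2 hj2; simp [updW, updB, nullEmb, hqne, hj2]
            · intro x i2
              have hfn : feat σ (widen m p)
                  (updW (nullEmb m p α θ) (p + 1) i (m (p + 1)) t) x (p + 1) (m (p + 1))
                  = σ α := by
                refine featNew_eq σ m p α _ x ?_ ?_
                · intro j2; simp [updW, nullEmb, hpne]
                · simp [updW, nullEmb, hpne]
              rw [hfn]
              by_cases h : i2 = i
              · simp [updW, updB, nullEmb, hqne, h]; ring
              · simp [updW, updB, nullEmb, hqne, h]
          have heq : (fun t => risk σ (widen m p) K loss X Y
                (updW (nullEmb m p α θ) (p + 1) i (m (p + 1)) t))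
              = fun t => risk σ m K loss X Y
                (updB θ (p + 1) i ((θ (p + 1)).2 i + σ α * t)) :=
            funext fun t => risk_eq_of σ m p K hp _ _ (hsim t) loss X Y
          rw [heq, show ((nullEmb m p α θ) (p + 1)).1 i (m (p + 1)) = 0 by
            simp [nullEmb, hqne]]
          have h0 := deriv_affine (fun u => risk σ m K loss X Y (updB θ (p + 1) i u))
            ((θ (p + 1)).2 i) (σ α)
          rw [hcB (p + 1) hp i hi, mul_zero] at h0
          exact h0
      · -- other layers
        have hθl : nullEmb m p α θ l = θ l := by simp [nullEmb, hlp, hlq]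
        rw [widen_ne m p (l + 1) (by omega)] at hi
        rw [widen_ne m p l hlq] at hj
        have hsim : ∀ t, SimH σ m p (updW (nullEmb m p α θ) l i j t) (updW θ l i j t) := by
          intro t
          refine simH_of σ m p _ _ ?_ ?_ ?_ ?_ ?_ ?_
          · intro l' h1 h2
            by_cases hl' : l' = l
            · subst hl'; simp [updW, hθl]
            · simp [updW, nullEmb, h1, h2, hl']
          · intro i2 hi2 j2; simp [updW, nullEmb, hlp, Ne.symm hlp, Nat.ne_of_lt hi2]
          · intro i2 hi2; simp [updW, nullEmb, hlp, Ne.symm hlp, Nat.ne_of_lt hi2]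
          · intro i2 j2 hj2; simp [updW, nullEmb, hqne, Ne.symm hlq, hj2]
          · intro i2; simp [updW, nullEmb, hqne, Ne.symm hlq]
          · intro i2; simp [updW, nullEmb, hqne, Ne.symm hlq]
        have heq : (fun t => risk σ (widen m p) K loss X Y (updW (nullEmb m p α θ) l i j t))
            = fun t => risk σ m K loss X Y (updW θ l i j t) :=
          funext fun t => risk_eq_of σ m p K hp _ _ (hsim t) loss X Y
        rw [heq, show ((nullEmb m p α θ) l).1 i j = (θ l).1 i j by rw [hθl]]
        exact hcW l hl i hi j hj
  · -- biases
    intro l hl i hi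
    by_cases hlp : l = p
    · rw [hlp] at hi ⊢
      rw [widen_self] at hi
      rcases Nat.lt_succ_iff_lt_or_eq.mp hi with hi' | rfl
      · have hsim : ∀ t, SimH σ m p (updB (nullEmb m p α θ) p i t) (updB θ p i t) := by
          intro t
          refine simH_of σ m p _ _ ?_ ?_ ?_ ?_ ?_ ?_
          · intro l' h1 h2; simp [updB, nullEmb, h1, h2]
          · intro i2 hi2 j2; simp [updB, nullEmb, Nat.ne_of_lt hi2]
          · intro i2 hi2
            by_cases h : i2 = i <;> simp [updB, nullEmb, h, Nat.ne_of_lt hi2]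
          · intro i2 j2 hj2; simp [updB, nullEmb, hpne, hqne, hj2]
          · intro i2; simp [updB, nullEmb, hpne, hqne]
          · intro i2; simp [updB, nullEmb, hpne, hqne]
        have heq : (fun t => risk σ (widen m p) K loss X Y (updB (nullEmb m p α θ) p i t))
            = fun t => risk σ m K loss X Y (updB θ p i t) :=
          funext fun t => risk_eq_of σ m p K hp _ _ (hsim t) loss X Y
        rw [heq, show ((nullEmb m p α θ) p).2 i = (θ p).2 i by
          simp [nullEmb, Nat.ne_of_lt hi']]
        exact hcB p (le_of_lt hp) i hi'
      · have hsim : ∀ t, SimH σ m p (updB (nullEmb m p α θ) p (m (p + 1)) t) θ := by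
          intro t
          refine simH_of σ m p _ _ ?_ ?_ ?_ ?_ ?_ ?_
          · intro l' h1 h2; simp [updB, nullEmb, h1, h2]
          · intro i2 hi2 j2; simp [updB, nullEmb, Nat.ne_of_lt hi2]
          · intro i2 hi2; simp [updB, nullEmb, Nat.ne_of_lt hi2]
          · intro i2 j2 hj2; simp [updB, nullEmb, hpne, hqne, hj2]
          · intro i2; simp [updB, nullEmb, hpne, hqne]
          · intro i2; simp [updB, nullEmb, hpne, hqne]
        have heq : (fun t => risk σ (widen m p) K loss X Y
              (updB (nullEmb m p α θ) p (m (p + 1)) t))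
            = fun _ => risk σ m K loss X Y θ :=
          funext fun t => risk_eq_of σ m p K hp _ _ (hsim t) loss X Y
        rw [heq]
        exact deriv_const _ _
    · by_cases hlq : l = p + 1
      · rw [hlq] at hi ⊢
        rw [widen_ne m p (p + 1 + 1) (by omega)] at hi
        have hsim : ∀ t, SimH σ m p (updB (nullEmb m p α θ) (p + 1) i t)
            (updB θ (p + 1) i t) := by
          intro t
          refine simH_of σ m p _ _ ?_ ?_ ?_ ?_ ?_ ?_
          · intro l' h1 h2; simp [updB, nullEmb, h1, h2]
          · intro i2 hi2 j2; simp [updB, nullEmb, hpne, Nat.ne_of_lt hi2]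
          · intro i2 hi2; simp [updB, nullEmb, hpne, Nat.ne_of_lt hi2]
          · intro i2 j2 hj2; simp [updB, nullEmb, hqne, hj2]
          · intro i2; simp [updB, nullEmb, hqne]
          · intro i2
            by_cases h : i2 = i <;> simp [updB, nullEmb, hqne, h]
        have heq : (fun t => risk σ (widen m p) K loss X Y
              (updB (nullEmb m p α θ) (p + 1) i t))
            = fun t => risk σ m K loss X Y (updB θ (p + 1) i t) :=
          funext fun t => risk_eq_of σ m p K hp _ _ (hsim t) loss X Y
        rw [heq, show ((nullEmb m p α θ) (p + 1)).2 i = (θ (p + 1)).2 i by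
          simp [nullEmb, hqne]]
        exact hcB (p + 1) hp i hi
      · have hθl : nullEmb m p α θ l = θ l := by simp [nullEmb, hlp, hlq]
        rw [widen_ne m p (l + 1) (by omega)] at hi
        have hsim : ∀ t, SimH σ m p (updB (nullEmb m p α θ) l i t) (updB θ l i t) := by
          intro t
          refine simH_of σ m p _ _ ?_ ?_ ?_ ?_ ?_ ?_
          · intro l' h1 h2
            by_cases hl' : l' = l
            · subst hl'; simp [updB, hθl]
            · simp [updB, nullEmb, h1, h2, hl']
          · intro i2 hi2 j2; simp [updB, nullEmb, Ne.symm hlp, Nat.ne_of_lt hi2]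
          · intro i2 hi2; simp [updB, nullEmb, Ne.symm hlp, Nat.ne_of_lt hi2]
          · intro i2 j2 hj2; simp [updB, nullEmb, hqne, Ne.symm hlq, hj2]
          · intro i2; simp [updB, nullEmb, hqne, Ne.symm hlq]
          · intro i2; simp [updB, nullEmb, hqne, Ne.symm hlq]
        have heq : (fun t => risk σ (widen m p) K loss X Y (updB (nullEmb m p α θ) l i t))
            = fun t => risk σ m K loss X Y (updB θ l i t) :=
          funext fun t => risk_eq_of σ m p K hp _ _ (hsim t) loss X Y
        rw [heq, show ((nullEmb m p α θ) l).2 i = (θ l).2 i by rw [hθl]]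
        exact hcB l hl i hi


end EmbeddingPrinciple
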